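/- Let H be a connected graph of order a. Then for any b ∈ ℕ, the cyclic Ramsey number satisfies 1 + (a−1)(b−2) ≤ R_cyc(H, P_b^mon) ≤ 1 + (a−1)(b−1). -/

import Mathlib

open SimpleGraph Finset

/-- A symmetric `k`-edge-coloring `χ` of the complete graph on `Fin n` contains a copy of `H`
in color `j` via a strictly increasing embedding. -/
def ContainsOrd {m n k : ℕ} (H : SimpleGraph (Fin m))
    (χ : Fin n → Fin n → Fin k) (j : Fin k) : Prop :=
  ∃ φ : Fin m → Fin n, StrictMono φ ∧ ∀ u v : Fin m, H.Adj u v → χ (φ u) (φ v) = j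

/-- Contains a copy via an embedding that is increasing up to a cyclic permutation. -/
def ContainsCyc {m n k : ℕ} (H : SimpleGraph (Fin m))
    (χ : Fin n → Fin n → Fin k) (j : Fin k) : Prop :=
  ∃ φ : Fin m → Fin n, (∃ t : Fin m, StrictMono fun i : Fin m => φ (i + t)) ∧
    ∀ u v : Fin m, H.Adj u v → χ (φ u) (φ v) = j

/-- Contains a copy via an arbitrary injective embedding. -/
def ContainsStd {m n k : ℕ} (H : SimpleGraph (Fin m))
    (χ : Fin n → Fin n → Fin k) (j : Fin k) : Prop :=
  ∃ φ : Fin m → Fin n, Function.Injective φ ∧ ∀ u v : Fin m, H.Adj u v → χ (φ u) (φ v) = j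

/-- The ordered Ramsey number of a family of graphs. -/
noncomputable def Rord {k : ℕ} (m : Fin k → ℕ) (H : ∀ j, SimpleGraph (Fin (m j))) : ℕ :=
  sInf {n | ∀ χ : Fin n → Fin n → Fin k, (∀ u v, χ u v = χ v u) → ∃ j, ContainsOrd (H j) χ j}

/-- The cyclic Ramsey number of a family of graphs. -/
noncomputable def Rcyc {k : ℕ} (m : Fin k → ℕ) (H : ∀ j, SimpleGraph (Fin (m j))) : ℕ :=
  sInf {n | ∀ χ : Fin n → Fin n → Fin k, (∀ u v, χ u v = χ v u) → ∃ j, ContainsCyc (H j) χ j}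

/-- The standard Ramsey number of a family of graphs. -/
noncomputable def Rstd {k : ℕ} (m : Fin k → ℕ) (H : ∀ j, SimpleGraph (Fin (m j))) : ℕ :=
  sInf {n | ∀ χ : Fin n → Fin n → Fin k, (∀ u v, χ u v = χ v u) → ∃ j, ContainsStd (H j) χ j}

/-- The two-color ordered Ramsey number. -/
noncomputable def Rord2 {a b : ℕ} (H₁ : SimpleGraph (Fin a)) (H₂ : SimpleGraph (Fin b)) : ℕ :=
  sInf {n | ∀ χ : Fin n → Fin n → Fin 2, (∀ u v, χ u v = χ v u) →
    ContainsOrd H₁ χ 0 ∨ ContainsOrd H₂ χ 1}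

/-- The two-color cyclic Ramsey number. -/
noncomputable def Rcyc2 {a b : ℕ} (H₁ : SimpleGraph (Fin a)) (H₂ : SimpleGraph (Fin b)) : ℕ :=
  sInf {n | ∀ χ : Fin n → Fin n → Fin 2, (∀ u v, χ u v = χ v u) →
    ContainsCyc H₁ χ 0 ∨ ContainsCyc H₂ χ 1}

/-- The monotone path of order `n`. -/
def monPath (n : ℕ) : SimpleGraph (Fin n) :=
  SimpleGraph.fromRel fun u v => (u : ℕ) + 1 = (v : ℕ)

/-- The monotone cycle of order `n`. -/
def monCycle (n : ℕ) : SimpleGraph (Fin n) :=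
  SimpleGraph.fromRel fun u v => (u : ℕ) + 1 = (v : ℕ) ∨ ((u : ℕ) = 0 ∧ (v : ℕ) = n - 1)

/-- The start-central star of order `n` (center `0`). -/
def starSC (n : ℕ) : SimpleGraph (Fin n) :=
  SimpleGraph.fromRel fun u _ => (u : ℕ) = 0

/-- The star of order `n` with center `c`. -/
def starG (n : ℕ) (c : Fin n) : SimpleGraph (Fin n) :=
  SimpleGraph.fromRel fun u _ => u = c

/-- The nested matching of order `n`. -/
def nestedMatching (n : ℕ) : SimpleGraph (Fin n) :=
  SimpleGraph.fromRel fun u v => (u : ℕ) + (v : ℕ) = n - 1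

/-- Rotational isomorphism of two graphs on `Fin m`. -/
def RotIso {m : ℕ} (G₁ G₂ : SimpleGraph (Fin m)) : Prop :=
  ∃ s : Fin m, ∀ u v : Fin m, G₁.Adj u v ↔ G₂.Adj (u + s) (v + s)

set_option maxHeartbeats 1000000

def gfun (c : ℕ → ℕ → Fin 2) : ℕ → ℕ
  | k => ((Finset.range k).attach.filter fun j => c j.1 k = 1).sup
      fun j => gfun c j.1 + 1
  decreasing_by exact Finset.mem_range.mp j.2

lemma gfun_lt {c : ℕ → ℕ → Fin 2} {j k : ℕ} (hjk : j < k) (hc : c j k = 1) :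
    gfun c j < gfun c k := by
  conv_rhs => rw [gfun]
  have hmem : (⟨j, Finset.mem_range.mpr hjk⟩ : {x // x ∈ Finset.range k}) ∈
      ((Finset.range k).attach.filter fun j => c j.1 k = 1) := by
    simp [hc]
  have h2 := Finset.le_sup (f := fun j : {x // x ∈ Finset.range k} => gfun c j.1 + 1) hmem
  simp only at h2
  omega

lemma gfun_path (c : ℕ → ℕ → Fin 2) (k : ℕ) :
    ∀ m ≤ gfun c k, ∃ l : List ℕ,
      l.Chain' (fun u v => u < v ∧ c u v = 1) ∧ l.length = m + 1 ∧ l.getLast? = some k := by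
  induction k using Nat.strong_induction_on with
  | _ k ih =>
    intro m hm
    match m with
    | 0 => exact ⟨[k], List.isChain_singleton _, by simp, by simp⟩
    | m + 1 =>
      have hpos : 0 < gfun c k := by omega
      rw [gfun] at hpos hm
      set s := ((Finset.range k).attach.filter fun j => c j.1 k = 1) with hs
      have hne : s.Nonempty := by
        by_contra hemp
        rw [Finset.not_nonempty_iff_eq_empty] at hemp
        rw [hemp] at hpos
        simp at hpos
      obtain ⟨x, hxs, hsup⟩ := Finset.exists_mem_eq_sup s hne fun j => gfun c j.1 + 1
      have hxk : x.1 < k := Finset.mem_range.mp x.2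
      have hcx : c x.1 k = 1 := (Finset.mem_filter.mp hxs).2
      have hgx : m ≤ gfun c x.1 := by omega
      obtain ⟨l, hch, hlen, hlast⟩ := ih x.1 hxk m hgx
      refine ⟨l ++ [k], ?_, by simp [hlen], by simp⟩
      apply List.isChain_append.mpr
      refine ⟨hch, by simp, ?_⟩
      intro y hy z hz
      rw [hlast] at hy
      simp at hy hz
      subst hy; subst hz
      exact ⟨hxk, hcx⟩

lemma upper_mem {a b N : ℕ} (H : SimpleGraph (Fin a)) (ha : 1 ≤ a) (hb : 2 ≤ b)
    (hNa : (a-1)*(b-1) < N)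
    (χ : Fin N → Fin N → Fin 2)
    (hsym : ∀ u v, χ u v = χ v u) :
    ContainsCyc H χ 0 ∨ ContainsCyc (monPath b) χ 1 := by
  set c : ℕ → ℕ → Fin 2 := (fun u v =>
    if hu : u < N then if hv : v < N then χ ⟨u,hu⟩ ⟨v,hv⟩ else 0 else 0) with hc
  have hcb : ∀ u v, c u v = 1 → u < N ∧ v < N := by
    intro u v h
    rw [hc] at h
    dsimp only at h
    split_ifs at h with h1 h2
    · exact ⟨h1, h2⟩
    · exact absurd h (by decide)
    · exact absurd h (by decide)
  have hcχ : ∀ (x y : Fin N), c x.1 y.1 = χ x y := by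
    intro x y
    rw [hc]
    dsimp only
    rw [dif_pos x.2, dif_pos y.2]
  by_cases hcase : ∃ k, b - 1 ≤ gfun c k
  · right
    obtain ⟨k, hk⟩ := hcase
    obtain ⟨l, hch, hlen, -⟩ := gfun_path c k (b-1) hk
    have hlenb : l.length = b := by omega
    have hget := fun i (h : i < l.length - 1) => List.isChain_iff_getElem.mp hch i (by omega)
    have hbound : ∀ i (hi : i < l.length), l.get ⟨i, hi⟩ < N := by
      intro i hi
      rcases Nat.lt_or_ge i (l.length - 1) with h | h
      · exact (hcb _ _ (hget i h).2).1
      · have h2 : i - 1 < l.length - 1 := by omega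
        have := (hcb _ _ (hget (i-1) h2).2).2
        have heq : (⟨i-1+1, by omega⟩ : Fin l.length) = ⟨i, hi⟩ := by
          apply Fin.ext; simp; omega
        simpa [show i - 1 + 1 = i by omega] using this
    set φ : Fin b → Fin N := fun i => ⟨l.get ⟨i.1, by omega⟩, hbound _ _⟩ with hφ
    have hmono : StrictMono φ := by
      have hlt : l.Chain' (· < ·) := hch.imp (fun x y h => h.1)
      have hpw := (List.isChain_iff_pairwise.mp hlt)
      have hg := List.pairwise_iff_get.mp hpw
      intro x y hxy
      exact hg ⟨x.1, by omega⟩ ⟨y.1, by omega⟩ hxy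
    have key : ∀ u v : Fin b, (u:ℕ) + 1 = (v:ℕ) → χ (φ u) (φ v) = 1 := by
      intro u v huv
      rw [← hcχ]
      have h2 : u.1 < l.length - 1 := by omega
      have h3 := (hget u.1 h2).2
      have heq : (φ v).1 = l.get ⟨u.1+1, by omega⟩ := by
        simp only [hφ]
        congr 1
        apply Fin.ext
        simp [huv.symm]
      rw [heq]
      exact h3
    refine ⟨φ, ⟨⟨0, by omega⟩, ?_⟩, ?_⟩
    · intro x y hxy
      apply hmono
      have : (⟨0, by omega⟩ : Fin b).1 = 0 := rfl
      simp only [Fin.lt_def, Fin.add_def, this, Nat.add_zero] at *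
      rwa [Nat.mod_eq_of_lt x.2, Nat.mod_eq_of_lt y.2]
    · intro u v hadj
      rw [monPath, SimpleGraph.fromRel_adj] at hadj
      obtain ⟨hne, hrel⟩ := hadj
      rcases hrel with h | h
      · exact key u v h
      · rw [hsym]; exact key v u h
  · left
    push_neg at hcase
    have hb1 : 0 < b - 1 := by omega
    set F : Fin N → Fin (b-1) := fun v => ⟨gfun c v.1, by have := hcase v.1; omega⟩ with hF
    have hcard : Fintype.card (Fin (b-1)) * (a-1) < Fintype.card (Fin N) := by
      rw [Fintype.card_fin, Fintype.card_fin, Nat.mul_comm]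
      omega
    obtain ⟨y, hy⟩ := Fintype.exists_lt_card_fiber_of_mul_lt_card F hcard
    obtain ⟨t, hts, htc⟩ := Finset.exists_subset_card_eq (by omega : a ≤ (Finset.univ.filter fun x => F x = y).card)
    set φ := t.orderEmbOfFin htc with hφ
    have hmonoφ : StrictMono (φ : Fin a → Fin N) := (t.orderEmbOfFin htc).strictMono
    refine ⟨φ, ⟨⟨0, by omega⟩, ?_⟩, ?_⟩
    · intro x y hxy
      apply hmonoφ
      have : (⟨0, by omega⟩ : Fin a).1 = 0 := rfl
      simp only [Fin.lt_def, Fin.add_def, this, Nat.add_zero] at *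
      rwa [Nat.mod_eq_of_lt x.2, Nat.mod_eq_of_lt y.2]
    · intro u v hadj
      have hmem : ∀ x : Fin a, (φ x : Fin N) ∈ t := fun x => t.orderEmbOfFin_mem htc x
      have hfeq : gfun c (φ u : Fin N).1 = gfun c (φ v : Fin N).1 := by
        have h1 := (Finset.mem_filter.mp (hts (hmem u))).2
        have h2 := (Finset.mem_filter.mp (hts (hmem v))).2
        have h3 : F (φ u) = F (φ v) := h1.trans h2.symm
        simpa [hF, Fin.ext_iff] using h3
      by_contra hne0
      have h1 : χ (φ u) (φ v) = 1 := by
        rcases Fin.exists_fin_two.mp ⟨χ (φ u) (φ v), rfl⟩ with h | h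
        · exact absurd h hne0
        · exact h
      have hneuv : (φ u : Fin N) ≠ φ v := fun h => hadj.ne (hmonoφ.injective h)
      rcases lt_or_gt_of_ne hneuv with hlt | hlt
      · have hc1 : c (φ u : Fin N).1 (φ v : Fin N).1 = 1 := by rw [hcχ]; exact h1
        exact absurd hfeq (Nat.ne_of_lt (gfun_lt hlt hc1))
      · have h1' : χ (φ v) (φ u) = 1 := by rw [hsym]; exact h1
        have hc1 : c (φ v : Fin N).1 (φ u : Fin N).1 = 1 := by rw [hcχ]; exact h1'
        exact absurd hfeq.symm (Nat.ne_of_lt (gfun_lt hlt hc1))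

lemma lower_aux {a b n : ℕ} (H : SimpleGraph (Fin a)) (hH : H.Connected) (ha : 2 ≤ a) (hb : 3 ≤ b)
    (hn : n ≤ (a-1)*(b-2))
    (hfull : ∀ χ : Fin n → Fin n → Fin 2, (∀ u v, χ u v = χ v u) →
      ContainsCyc H χ 0 ∨ ContainsCyc (monPath b) χ 1) : False := by
  have ha1 : 0 < a - 1 := by omega
  haveI hbZ : NeZero b := ⟨by omega⟩
  haveI haZ : NeZero a := ⟨by omega⟩
  set χ : Fin n → Fin n → Fin 2 :=
    (fun u v => if (u:ℕ)/(a-1) = (v:ℕ)/(a-1) then 0 else 1) with hχ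
  have hsym : ∀ u v, χ u v = χ v u := by
    intro u v
    simp only [hχ]
    split_ifs with h1 h2 h2
    · rfl
    · exact absurd h1.symm h2
    · exact absurd h2.symm h1
    · rfl
  have hblk : ∀ u v : Fin n, χ u v = 0 → (u:ℕ)/(a-1) = (v:ℕ)/(a-1) := by
    intro u v h
    by_contra hne
    rw [hχ] at h; dsimp only at h; rw [if_neg hne] at h; exact absurd h (by decide)
  have hblk1 : ∀ u v : Fin n, χ u v = 1 → (u:ℕ)/(a-1) ≠ (v:ℕ)/(a-1) := by
    intro u v h hne
    rw [hχ] at h; dsimp only at h; rw [if_pos hne] at h; exact absurd h (by decide)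
  rcases hfull χ hsym with ⟨φ, ⟨t, hmono⟩, hedge⟩ | ⟨φ, ⟨t, hmono⟩, hedge⟩
  · -- color 0 : copy of H
    set ψ : Fin a → Fin n := (fun i => φ (i + t)) with hψ
    have hφψ : ∀ x, φ x = ψ (x - t) := by
      intro x; rw [hψ]; dsimp only; rw [sub_add_cancel]
    have hinj : Function.Injective φ := by
      intro x y h
      rw [hφψ x, hφψ y] at h
      have h2 := hmono.injective h
      have h3 := congrArg (· + t) h2
      simpa [sub_add_cancel] using h3
    have hconst : ∀ u v : Fin a, ((φ u : Fin n) : ℕ)/(a-1) = ((φ v : Fin n) : ℕ)/(a-1) := by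
      intro u v
      obtain ⟨w⟩ := hH.preconnected u v
      induction w with
      | nil => rfl
      | cons h p ih => exact (hblk _ _ (hedge _ _ h)).trans ih
    set q := ((φ ⟨0, by omega⟩ : Fin n) : ℕ)/(a-1) with hq
    have hmaps : ∀ x : Fin a, ((φ x : Fin n) : ℕ) ∈ Finset.Ico ((a-1)*q) ((a-1)*q + (a-1)) := by
      intro x
      have h1 : ((φ x : Fin n) : ℕ)/(a-1) = q := hconst x ⟨0, by omega⟩
      have h2 := Nat.div_add_mod ((φ x : Fin n) : ℕ) (a-1)
      have h3 := Nat.mod_lt ((φ x : Fin n) : ℕ) ha1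
      rw [h1] at h2
      rw [Finset.mem_Ico]
      omega
    have h4 : (Finset.univ : Finset (Fin a)).card ≤
        (Finset.Ico ((a-1)*q) ((a-1)*q + (a-1))).card := by
      apply Finset.card_le_card_of_injOn (fun x => ((φ x : Fin n) : ℕ))
      · intro x _; exact hmaps x
      · intro x _ y _ h
        exact hinj (Fin.ext h)
    rw [Finset.card_univ, Fintype.card_fin, Nat.card_Ico] at h4
    omega
  · -- color 1 : monotone path
    set ψ : Fin b → Fin n := (fun i => φ (i + t)) with hψ
    have hφψ : ∀ x, φ x = ψ (x - t) := by
      intro x; rw [hψ]; dsimp only; rw [sub_add_cancel]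
    have hBlt : ∀ x : Fin n, (x:ℕ)/(a-1) < b - 2 := by
      intro x
      have hx : (x:ℕ) < (a-1)*(b-2) := lt_of_lt_of_le x.2 hn
      rw [Nat.div_lt_iff_lt_mul ha1, Nat.mul_comm]
      exact hx
    have hb1b : b - 1 < b := by omega
    obtain ⟨e, he⟩ : ∃ e : ℕ, e = (((⟨b-1, hb1b⟩ : Fin b) - t) : Fin b).1 := ⟨_, rfl⟩
    have hminlt : ∀ i : ℕ, min i (b-1) < b := fun i => by omega
    obtain ⟨vv, hvv⟩ : ∃ vv : ℕ → ℕ,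
        ∀ i, vv i = ((ψ ⟨min i (b-1), hminlt i⟩ : Fin n) : ℕ)/(a-1) := ⟨_, fun i => rfl⟩
    have hstep : ∀ i, i + 1 ≤ b - 1 → vv i ≤ vv (i+1) ∧ (i ≠ e → vv i < vv (i+1)) := by
      intro i hi
      have hilt : i < b := by omega
      have hi1lt : i + 1 < b := by omega
      have hmk1 : (⟨min i (b-1), hminlt i⟩ : Fin b) = ⟨i, hilt⟩ := by
        apply Fin.ext; simp only; omega
      have hmk2 : (⟨min (i+1) (b-1), hminlt (i+1)⟩ : Fin b) = ⟨i+1, hi1lt⟩ := by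
        apply Fin.ext; simp only; omega
      have hvvi : vv i = ((ψ ⟨i, hilt⟩ : Fin n) : ℕ)/(a-1) := by rw [hvv, hmk1]
      have hvvi1 : vv (i+1) = ((ψ ⟨i+1, hi1lt⟩ : Fin n) : ℕ)/(a-1) := by rw [hvv, hmk2]
      have hlt : (ψ ⟨i, hilt⟩ : Fin n) < ψ ⟨i+1, hi1lt⟩ := by
        apply hmono
        rw [Fin.lt_def]
        exact Nat.lt_succ_self i
      have hle : vv i ≤ vv (i+1) := by
        rw [hvvi, hvvi1]; exact Nat.div_le_div_right hlt.le
      refine ⟨hle, ?_⟩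
      intro hie
      have hune : (⟨i, hilt⟩ : Fin b) + t ≠ ⟨b-1, hb1b⟩ := by
        intro hh
        apply hie
        have h6 : (⟨i, hilt⟩ : Fin b) = (⟨b-1, hb1b⟩ : Fin b) - t := by
          rw [← hh, add_sub_cancel_right]
        rw [he, ← h6]
      have hub : ((⟨i, hilt⟩ : Fin b) + t).1 + 1 < b := by
        have h5 := ((⟨i, hilt⟩ : Fin b) + t).2
        have h6 : ((⟨i, hilt⟩ : Fin b) + t).1 ≠ b - 1 := fun hh => hune (Fin.ext hh)
        omega
      have hv'v : ((⟨i, hilt⟩ : Fin b) + t + 1).1 = ((⟨i, hilt⟩ : Fin b) + t).1 + 1 := by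
        rw [Fin.val_add, Fin.val_one', Nat.mod_eq_of_lt (show 1 < b by omega),
          Nat.mod_eq_of_lt hub]
      have hadj : (monPath b).Adj ((⟨i, hilt⟩ : Fin b) + t) ((⟨i, hilt⟩ : Fin b) + t + 1) := by
        rw [monPath, SimpleGraph.fromRel_adj]
        exact ⟨fun hh => by rw [← hh] at hv'v; omega, Or.inl hv'v.symm⟩
      have h1 := hedge _ _ hadj
      have hne' := hblk1 _ _ h1
      have hju : (⟨i, hilt⟩ : Fin b) + t - t = ⟨i, hilt⟩ := by rw [add_sub_cancel_right]
      have hjv : (⟨i, hilt⟩ : Fin b) + t + 1 - t = (⟨i+1, hi1lt⟩ : Fin b) := by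
        have h7 : (⟨i, hilt⟩ : Fin b) + t + 1 - t = ⟨i, hilt⟩ + 1 := by rw [add_right_comm, add_sub_cancel_right]
        rw [h7]
        apply Fin.ext
        rw [Fin.val_add, Fin.val_one']
        simp only
        rw [Nat.mod_eq_of_lt (show 1 < b by omega), Nat.mod_eq_of_lt (by omega)]
      rw [hφψ ((⟨i, hilt⟩ : Fin b) + t), hφψ ((⟨i, hilt⟩ : Fin b) + t + 1), hju, hjv] at hne'
      rw [hvvi, hvvi1] at hle ⊢
      exact lt_of_le_of_ne hle hne'
    have claim : ∀ i, i ≤ b - 1 → (i ≤ e → vv 0 + i ≤ vv i) ∧ (e < i → vv 0 + i ≤ vv i + 1) := by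
      intro i
      induction i with
      | zero => exact fun _ => ⟨fun _ => by omega, fun _ => by omega⟩
      | succ i ih =>
        intro hi
        obtain ⟨c1, c2⟩ := ih (by omega)
        have hstepi := hstep i (by omega)
        constructor
        · intro hie
          have h8 := c1 (by omega)
          have h9 := hstepi.2 (by omega)
          omega
        · intro hie
          rcases Nat.eq_or_lt_of_le (Nat.lt_succ_iff.mp hie) with heq | hlt
          · have h8 := c1 (by omega)
            have h9 := hstepi.1
            omega
          · have h8 := c2 hlt
            have h9 := hstepi.2 (by omega)
            omega
    have he' : e ≤ b - 1 := by
      have h5 := (((⟨b-1, hb1b⟩ : Fin b) - t)).2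
      omega
    have hfin := claim (b-1) le_rfl
    have hvb : vv (b-1) < b - 2 := by rw [hvv]; exact hBlt _
    rcases Nat.eq_or_lt_of_le he' with heq | hlt
    · have := hfin.1 (by omega)
      omega
    · have := hfin.2 hlt
      omega


theorem stmt7 {a : ℕ} (H : SimpleGraph (Fin a)) (hH : H.Connected) (b : ℕ) (hb : 1 ≤ b) :
    1 + (a - 1) * (b - 2) ≤ Rcyc2 H (monPath b) ∧
      Rcyc2 H (monPath b) ≤ 1 + (a - 1) * (b - 1) := by
  have ha : 1 ≤ a := by
    obtain ⟨x⟩ := hH.nonempty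
    exact x.pos
  have hmem : (1 + (a-1)*(b-1)) ∈ {n | ∀ χ : Fin n → Fin n → Fin 2, (∀ u v, χ u v = χ v u) →
      ContainsCyc H χ 0 ∨ ContainsCyc (monPath b) χ 1} := by
    intro χ hsym
    rcases Nat.lt_or_ge b 2 with hb2 | hb2
    · right
      have hb1 : b = 1 := by omega
      subst hb1
      refine ⟨fun _ => ⟨0, by omega⟩, ⟨⟨0, by omega⟩, ?_⟩, ?_⟩
      · intro x y hxy
        exact absurd (Subsingleton.elim x y) (ne_of_lt hxy)
      · intro u v hadj
        exact absurd (Subsingleton.elim u v) hadj.ne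
    · exact upper_mem H ha hb2 (by omega) χ hsym
  constructor
  · rw [Rcyc2]
    apply le_csInf ⟨_, hmem⟩
    intro n hn
    by_contra hcon
    push_neg at hcon
    have hn' : n ≤ (a-1)*(b-2) := by omega
    rcases Nat.eq_zero_or_pos n with h0 | h0
    · subst h0
      rcases hn (fun _ _ => 0) (fun _ _ => rfl) with ⟨φ, -, -⟩ | ⟨φ, -, -⟩
      · exact (φ ⟨0, by omega⟩).elim0
      · exact (φ ⟨0, by omega⟩).elim0
    · have hprod : 1 ≤ (a-1)*(b-2) := le_trans h0 hn'
      have ha2 : 2 ≤ a := by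
        by_contra h
        have hz : a - 1 = 0 := by omega
        rw [hz, Nat.zero_mul] at hprod; omega
      have hb3 : 3 ≤ b := by
        by_contra h
        have hz : b - 2 = 0 := by omega
        rw [hz, Nat.mul_zero] at hprod; omega
      exact lower_aux H hH ha2 hb3 hn' hn
  · rw [Rcyc2]
    exact Nat.sInf_le hmem
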